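/- arXiv:2304.06960 — 2 statements merged into one kernel-verified Lean document; each statement's English description precedes it below -/
import Mathlib

section
/- If ŵ minimizes CV(w) over Q_n and sup_{w ∈ Q_n} |CV(w) − L(w) − c| / L(w) → 0 in probability for some constant c not depending on w, where L(w) > 0, then L(ŵ) / inf_{w ∈ Q_n} L(w) → 1 in probability. -/
open MeasureTheory Filter

/-- Generic asymptotic-optimality lemma: if `w1_n` minimizes `CV_n` over a
set `Q` and `sup_{w ∈ Q} |CV_n(w) - L_n(w) - c_n| / L_n(w) → 0` in probability, with
`L_n > 0` on `Q`, then `L_n(w1_n)/inf_{w ∈ Q} L_n(w) → 1` in probability. -/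
theorem generic_asymptotic_optimality
    {Ω : Type*} [MeasurableSpace Ω] (μ : Measure Ω) [IsProbabilityMeasure μ]
    (K : ℕ) (Q : Set (Fin K → ℝ)) (hQc : IsCompact Q) (hQne : Q.Nonempty)
    (L CV : ℕ → Ω → (Fin K → ℝ) → ℝ)
    (c : ℕ → Ω → ℝ)
    (hLpos : ∀ n ω, ∀ w ∈ Q, 0 < L n ω w)
    (hLcont : ∀ n ω, ContinuousOn (L n ω) Q)
    (hCVcont : ∀ n ω, ContinuousOn (CV n ω) Q)
    (what : ℕ → Ω → (Fin K → ℝ))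
    (hwhat : ∀ n ω, what n ω ∈ Q ∧ ∀ w ∈ Q, CV n ω (what n ω) ≤ CV n ω w)
    (hunif : TendstoInMeasure μ
      (fun n ω => ⨆ w : Q, |CV n ω w - L n ω w - c n ω| / L n ω w)
      atTop (fun _ => (0:ℝ))) :
    TendstoInMeasure μ
      (fun n ω => L n ω (what n ω) / ⨅ w : Q, L n ω w)
      atTop (fun _ => (1:ℝ)) := by
  rw [tendstoInMeasure_iff_dist] at hunif ⊢
  intro ε hε
  set δ : ℝ := min (1/2) (ε/4) with hδdef
  have hδpos : 0 < δ := lt_min (by norm_num) (by linarith)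
  have : Nonempty ↑Q := hQne.to_subtype
  have key : ∀ n, {ω | ε ≤ dist (L n ω (what n ω) / ⨅ w : Q, L n ω w) 1}
      ⊆ {ω | δ ≤ dist (⨆ w : Q, |CV n ω w - L n ω w - c n ω| / L n ω w) 0} := by
    intro n ω hω
    by_contra hS
    simp only [Set.mem_setOf_eq, not_le] at hS
    apply absurd hω
    simp only [Set.mem_setOf_eq, not_le]
    set S := ⨆ w : Q, |CV n ω w - L n ω w - c n ω| / L n ω w with hSdef
    have hSδ : S < δ := lt_of_le_of_lt (le_abs_self S)
      (by rwa [Real.dist_eq, sub_zero] at hS)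
    obtain ⟨w0, hw0Q, hw0min⟩ := hQc.exists_isMinOn hQne (hLcont n ω)
    set m := L n ω w0 with hmdef
    have hmpos : 0 < m := hLpos n ω w0 hw0Q
    have hbdd : BddBelow (Set.range fun w : Q => L n ω w) := by
      refine ⟨m, ?_⟩
      rintro x ⟨w, rfl⟩
      exact hw0min w.2
    have hinf : (⨅ w : Q, L n ω w) = m :=
      le_antisymm (ciInf_le hbdd ⟨w0, hw0Q⟩) (le_ciInf fun w => hw0min w.2)
    set g := fun w => |CV n ω w - L n ω w - c n ω| / L n ω w with hgdef
    have hgcont : ContinuousOn g Q :=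
      (((hCVcont n ω).sub (hLcont n ω)).sub continuousOn_const).abs.div (hLcont n ω)
        (fun w hw => (hLpos n ω w hw).ne')
    have hbddS : BddAbove (Set.range fun w : Q => g w) := by
      have h1 : (Set.range fun w : Q => g w) = g '' Q := Set.range_restrict g Q
      rw [h1]
      exact (hQc.image_of_continuousOn hgcont).bddAbove
    have hle : ∀ w ∈ Q, g w ≤ S := fun w hw => le_ciSup hbddS ⟨w, hw⟩
    have hS0 : 0 ≤ S :=
      le_trans (div_nonneg (abs_nonneg _) hmpos.le) (hle w0 hw0Q)
    obtain ⟨hw1Q, hw1min⟩ := hwhat n ω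
    have hLw1pos : 0 < L n ω (what n ω) := hLpos n ω _ hw1Q
    have h1 : |CV n ω (what n ω) - L n ω (what n ω) - c n ω| ≤ S * L n ω (what n ω) :=
      (div_le_iff₀ hLw1pos).mp (hle _ hw1Q)
    have h2 : |CV n ω w0 - L n ω w0 - c n ω| ≤ S * m :=
      (div_le_iff₀ hmpos).mp (hle _ hw0Q)
    have h3 : CV n ω (what n ω) ≤ CV n ω w0 := hw1min w0 hw0Q
    have h1' := abs_le.mp h1
    have h2' := abs_le.mp h2
    have h4 : L n ω (what n ω) * (1 - S) ≤ m * (1 + S) := by nlinarith [h1'.1, h2'.2]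
    have hm : m ≤ L n ω (what n ω) := hw0min hw1Q
    have hSε : S < ε / 4 := lt_of_lt_of_le hSδ (min_le_right _ _)
    have hShalf : S < 1 / 2 := lt_of_lt_of_le hSδ (min_le_left _ _)
    rw [hinf, Real.dist_eq, abs_of_nonneg (by
      have : (1:ℝ) ≤ L n ω (what n ω) / m := (one_le_div hmpos).mpr hm
      linarith)]
    rw [div_sub_one hmpos.ne', div_lt_iff₀ hmpos]
    nlinarith [h4, hmpos, hSε, hS0, hm, hShalf]
  refine tendsto_of_tendsto_of_tendsto_of_le_of_le tendsto_const_nhds (hunif δ hδpos)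
    (fun n => zero_le) (fun n => measure_mono (key n))
end

section
/- Let L(w) = ‖Δ̂(w) − Δ‖² on the simplex Q_n and suppose ξ_n := inf_{w ∈ Q_n} L(w) → ∞ in probability while sup_{w ∈ Q_n} |a_n(w)| / L(w) → 0 in probability, where a_n(w) = CV(w) − L(w) − c_n for a w-free random quantity c_n. Then for ŵ = argmin CV, L(ŵ) ≤ (1 + o_p(1)) ξ_n. -/
open MeasureTheory Filter

/-- One-sided asymptotic optimality: with `ξ_n = inf_{w ∈ Q} L_n(w) → ∞`
in probability and uniform approximation `sup_{w ∈ Q} |CV_n(w) - L_n(w) - c_n|/L_n(w) → 0`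
in probability, the CV minimizer `ŵ_n` satisfies `L_n(ŵ_n)/ξ_n ≤ 1 + o_p(1)`, i.e. for
every `ε > 0`, `P(L_n(ŵ_n)/ξ_n ≥ 1 + ε) → 0`. -/
theorem one_sided_asymptotic_optimality
    {Ω : Type*} [MeasurableSpace Ω] (μ : Measure Ω) [IsProbabilityMeasure μ]
    (K : ℕ) (Q : Set (Fin K → ℝ)) (hQc : IsCompact Q) (hQne : Q.Nonempty)
    (L CV : ℕ → Ω → (Fin K → ℝ) → ℝ)
    (c : ℕ → Ω → ℝ)
    (hLpos : ∀ n ω, ∀ w ∈ Q, 0 < L n ω w)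
    (hLcont : ∀ n ω, ContinuousOn (L n ω) Q)
    (hCVcont : ∀ n ω, ContinuousOn (CV n ω) Q)
    (ξ : ℕ → Ω → ℝ) (hξ : ∀ n ω, ξ n ω = ⨅ w : Q, L n ω w)
    (hξdiv : ∀ C : ℝ, Tendsto (fun n => μ {ω | ξ n ω ≤ C}) atTop (nhds 0))
    (what : ℕ → Ω → (Fin K → ℝ))
    (hwhat : ∀ n ω, what n ω ∈ Q ∧ ∀ w ∈ Q, CV n ω (what n ω) ≤ CV n ω w)
    (hunif : TendstoInMeasure μ
      (fun n ω => ⨆ w : Q, |CV n ω w - L n ω w - c n ω| / L n ω w)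
      atTop (fun _ => (0:ℝ))) :
    ∀ ε : ℝ, 0 < ε →
      Tendsto (fun n => μ {ω | 1 + ε ≤ L n ω (what n ω) / ξ n ω}) atTop (nhds 0) := by
  intro ε hε
  set δ : ℝ := min (1/2) (ε/5) with hδdef
  have hδpos : 0 < δ := lt_min (by norm_num) (by linarith)
  have hδhalf : δ ≤ 1/2 := min_le_left _ _
  have hδε : δ ≤ ε/5 := min_le_right _ _
  -- pointwise inclusion
  have hincl : ∀ n, {ω | 1 + ε ≤ L n ω (what n ω) / ξ n ω} ⊆
      {ω | δ ≤ dist ((fun ω => ⨆ w : Q, |CV n ω w - L n ω w - c n ω| / L n ω w) ω)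
        ((fun _ => (0:ℝ)) ω)} := by
    intro n ω hω
    simp only [Set.mem_setOf_eq] at hω ⊢
    set S : ℝ := ⨆ w : Q, |CV n ω w - L n ω w - c n ω| / L n ω w with hSdef
    have hSnonneg : 0 ≤ S := by
      apply Real.iSup_nonneg
      intro w
      exact div_nonneg (abs_nonneg _) (hLpos n ω w w.2).le
    rw [Real.dist_eq, sub_zero, abs_of_nonneg hSnonneg]
    by_contra hcon
    push_neg at hcon
    -- S < δ
    have hbdd : BddAbove (Set.range fun w : Q => |CV n ω w - L n ω w - c n ω| / L n ω w) := by
      have hcont : ContinuousOn (fun w => |CV n ω w - L n ω w - c n ω| / L n ω w) Q := by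
        apply ContinuousOn.div
        · exact (((hCVcont n ω).sub (hLcont n ω)).sub continuousOn_const).abs
        · exact hLcont n ω
        · intro w hw; exact (hLpos n ω w hw).ne'
      have := (hQc.image_of_continuousOn hcont).bddAbove
      rwa [← Set.range_restrict] at this
    have hbound : ∀ w ∈ Q, |CV n ω w - L n ω w - c n ω| ≤ δ * L n ω w := by
      intro w hw
      have h1 : |CV n ω w - L n ω w - c n ω| / L n ω w ≤ S :=
        le_ciSup hbdd ⟨w, hw⟩
      have h2 : |CV n ω w - L n ω w - c n ω| / L n ω w < δ := lt_of_le_of_lt h1 hcon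
      have := (div_lt_iff₀ (hLpos n ω w hw)).mp h2
      linarith
    -- minimizer of L
    obtain ⟨wstar, hwstarQ, hwstarmin⟩ := hQc.exists_isMinOn hQne (hLcont n ω)
    haveI : Nonempty Q := hQne.to_subtype
    have hξval : ξ n ω = L n ω wstar := by
      rw [hξ n ω]
      apply le_antisymm
      · have hbb : BddBelow (Set.range fun w : Q => L n ω w) := by
          refine ⟨0, ?_⟩
          rintro x ⟨w, rfl⟩
          exact (hLpos n ω w w.2).le
        exact ciInf_le hbb (⟨wstar, hwstarQ⟩ : Q)
      · exact le_ciInf fun w => hwstarmin w.2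
    have hξpos : 0 < ξ n ω := hξval ▸ hLpos n ω wstar hwstarQ
    obtain ⟨hwQ, hwmin⟩ := hwhat n ω
    have hLw : 0 < L n ω (what n ω) := hLpos n ω _ hwQ
    have hb1 := hbound _ hwQ
    have hb2 := hbound _ hwstarQ
    rw [abs_le] at hb1 hb2
    have hchain : (1 - δ) * L n ω (what n ω) ≤ (1 + δ) * ξ n ω := by
      have h1 : (1 - δ) * L n ω (what n ω) ≤ CV n ω (what n ω) - c n ω := by nlinarith [hb1.1]
      have h2 : CV n ω (what n ω) ≤ CV n ω wstar := hwmin _ hwstarQ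
      have h3 : CV n ω wstar - c n ω ≤ (1 + δ) * L n ω wstar := by nlinarith [hb2.2]
      rw [hξval]; linarith
    have hge : (1 + ε) * ξ n ω ≤ L n ω (what n ω) := (le_div_iff₀ hξpos).mp hω
    have hkey : (1 - δ) * ((1 + ε) * ξ n ω) ≤ (1 - δ) * L n ω (what n ω) :=
      mul_le_mul_of_nonneg_left hge (by linarith)
    nlinarith [hξpos, hδpos, mul_pos hε hξpos]
  -- squeeze
  have h0 : Tendsto (fun _ : ℕ => (0 : ENNReal)) atTop (nhds 0) := tendsto_const_nhds
  refine tendsto_of_tendsto_of_tendsto_of_le_of_le h0 (tendstoInMeasure_iff_dist.mp hunif δ hδpos) (fun n => zero_le)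
    (fun n => measure_mono (hincl n))
end
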